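/- For k ∈ {1,…,K} let V_k := {(x,u) ∈ ℋ × (0,1) : f(x,u) = k}. If P((X,U) ∈ ∪_{k=1}^K ∂V_k) = 0, where ∂V_k denotes the topological boundary of V_k in ℋ × (0,1) and U is Uniform(0,1) independent of X, then for Lebesgue-almost every u ∈ (0,1) one has f(X_{N(1)}, u) → f(X_1, u) in probability as n → ∞. -/

import Mathlib

open MeasureTheory ProbabilityTheory Filter Set

noncomputable section

/-- Indicator (as a real-valued function) of the event `Y = k`. -/
def ind {Ω : Type*} (Y : Ω → ℕ) (k : ℕ) : Ω → ℝ := fun ω => if Y ω = k then 1 else 0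

/-- `p_k = P(Y = k)`. -/
def levelProb {Ω : Type*} [MeasurableSpace Ω] (P : Measure Ω) (Y : Ω → ℕ) (k : ℕ) : ℝ :=
  (P {ω | Y ω = k}).toReal

/-- Covariance of two real-valued random variables. -/
def cov {Ω : Type*} [MeasurableSpace Ω] (P : Measure Ω) (f g : Ω → ℝ) : ℝ :=
  ∫ ω, f ω * g ω ∂P - (∫ ω, f ω ∂P) * (∫ ω, g ω ∂P)

/-- `Q_k(X) = P(Y = k ∣ X)`, the conditional expectation of `1{Y=k}` given `σ(X)`. -/
def condProb {Ω H : Type*} [MeasurableSpace Ω] [MeasurableSpace H]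
    (P : Measure Ω) (X : Ω → H) (Y : Ω → ℕ) (k : ℕ) : Ω → ℝ :=
  P[ind Y k | MeasurableSpace.comap X inferInstance]

/-- The dependence coefficient
`ψ(X,Y) = (1/(K−1)) Σ_{k,l=1}^K Cov(Q_k(X), Q_l(X))² / (p_k p_l)`. -/
def psi {Ω H : Type*} [MeasurableSpace Ω] [MeasurableSpace H]
    (P : Measure Ω) (X : Ω → H) (Y : Ω → ℕ) (K : ℕ) : ℝ :=
  (1 / ((K : ℝ) - 1)) * ∑ k ∈ Finset.Icc 1 K, ∑ l ∈ Finset.Icc 1 K,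
    (cov P (condProb P X Y k) (condProb P X Y l)) ^ 2 / (levelProb P Y k * levelProb P Y l)
open scoped Classical

/-- `ω`-wise property characterizing a nearest-neighbour assignment `N`: for each sample
size `n ≥ 2` and each `i < n`, `N n i ω` is the index `j < n`, `j ≠ i`, uniquely (strictly)
minimizing `dist (X i ω) (X j ω)` over `j ≠ i`. -/
def IsNNFun {Ω H : Type*} [MetricSpace H] (X : ℕ → Ω → H) (N : ℕ → ℕ → Ω → ℕ) (ω : Ω) : Prop :=
  ∀ n, 2 ≤ n → ∀ i < n, N n i ω < n ∧ N n i ω ≠ i ∧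
    ∀ j < n, j ≠ i → j ≠ N n i ω → dist (X i ω) (X (N n i ω) ω) < dist (X i ω) (X j ω)

/-- `\hat p_{k,l} = n⁻¹ Σ_{i=1}^n 1{Y_i = k, Y_{N(i)} = l}`. -/
def phat {Ω : Type*} (Y : ℕ → Ω → ℕ) (N : ℕ → ℕ → Ω → ℕ) (n k l : ℕ) (ω : Ω) : ℝ :=
  (1 / (n : ℝ)) * ∑ i ∈ Finset.range n, if Y i ω = k ∧ Y (N n i ω) ω = l then 1 else 0

/-- `\hat p_k = Σ_{l=1}^K \hat p_{k,l}`. -/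
def phatRow {Ω : Type*} (K : ℕ) (Y : ℕ → Ω → ℕ) (N : ℕ → ℕ → Ω → ℕ) (n k : ℕ) (ω : Ω) : ℝ :=
  ∑ l ∈ Finset.Icc 1 K, phat Y N n k l ω

/-- `\hat q_l = Σ_{k=1}^K \hat p_{k,l}`. -/
def qhatCol {Ω : Type*} (K : ℕ) (Y : ℕ → Ω → ℕ) (N : ℕ → ℕ → Ω → ℕ) (n l : ℕ) (ω : Ω) : ℝ :=
  ∑ k ∈ Finset.Icc 1 K, phat Y N n k l ω

/-- The estimator `\hatψ(X,Y)`; summands with vanishing denominator are interpreted as `0`. -/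
def psihat {Ω : Type*} (K : ℕ) (Y : ℕ → Ω → ℕ) (N : ℕ → ℕ → Ω → ℕ) (n : ℕ) (ω : Ω) : ℝ :=
  (1 / ((K : ℝ) - 1)) * ∑ k ∈ Finset.Icc 1 K, ∑ l ∈ Finset.Icc 1 K,
    if phatRow K Y N n k ω * qhatCol K Y N n l ω = 0 then 0
    else (phat Y N n k l ω - phatRow K Y N n k ω * qhatCol K Y N n l ω) ^ 2 /
      (phatRow K Y N n k ω * qhatCol K Y N n l ω)

/-- `W_n = n⁻¹ Σ_{i=1}^n 1{N(N(i)) = i}`, the fraction of mutual nearest-neighbour pairs. -/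
def Wfrac {Ω : Type*} (N : ℕ → ℕ → Ω → ℕ) (n : ℕ) (ω : Ω) : ℝ :=
  (1 / (n : ℝ)) * ∑ i ∈ Finset.range n, if N n (N n i ω) ω = i then 1 else 0

/-- `L_n`, the maximal in-degree of the nearest-neighbour graph of the first `n` points. -/
def Ldeg {Ω : Type*} (N : ℕ → ℕ → Ω → ℕ) (n : ℕ) (ω : Ω) : ℕ :=
  Finset.sup (Finset.range n) fun i => ((Finset.range n).filter fun j => N n j ω = i).card

/-- `P_n = √n · vec((\hat p_{k,l} − \hat p_k \hat q_l)_{k,l=1}^{K−1}) ∈ ℝ^{(K−1)²}`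
(the pair `(a,b) : Fin (K-1) × Fin (K-1)` encodes the indices `k = a+1`, `l = b+1`). -/
def Pvec {Ω : Type*} (K : ℕ) (Y : ℕ → Ω → ℕ) (N : ℕ → ℕ → Ω → ℕ) (n : ℕ) (ω : Ω) :
    Fin (K - 1) × Fin (K - 1) → ℝ := fun a =>
  Real.sqrt n * (phat Y N n ((a.1 : ℕ) + 1) ((a.2 : ℕ) + 1) ω -
    phatRow K Y N n ((a.1 : ℕ) + 1) ω * qhatCol K Y N n ((a.2 : ℕ) + 1) ω)

/-- The matrix `\hatΣ_n`. -/
def Sigmahat {Ω : Type*} (K : ℕ) (Y : ℕ → Ω → ℕ) (N : ℕ → ℕ → Ω → ℕ) (n : ℕ) (ω : Ω) :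
    Matrix (Fin (K - 1) × Fin (K - 1)) (Fin (K - 1) × Fin (K - 1)) ℝ := fun a b =>
  let p : ℕ → ℝ := fun k => phatRow K Y N n k ω
  let W : ℝ := Wfrac N n ω
  let k₁ : ℕ := (a.1 : ℕ) + 1
  let l₁ : ℕ := (a.2 : ℕ) + 1
  let k₂ : ℕ := (b.1 : ℕ) + 1
  let l₂ : ℕ := (b.2 : ℕ) + 1
  p k₁ * p l₁ * p k₂ * p l₂ * (1 + W)
    - p k₁ * p l₁ * p l₂ * ((if k₁ = k₂ then 1 else 0) + W * (if l₁ = k₂ then 1 else 0))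
    - p k₁ * p l₁ * p k₂ * ((if l₁ = l₂ then 1 else 0) + W * (if k₁ = l₂ then 1 else 0))
    + p k₁ * p l₁ * ((if k₁ = k₂ ∧ l₁ = l₂ then 1 else 0) +
        W * (if k₁ = l₂ ∧ l₁ = k₂ then 1 else 0))

/-- The test statistic `I_n = P_n' \hatΣ_n^{-1} P_n`, set to `0` when `\hatΣ_n` is singular. -/
def Istat {Ω : Type*} (K : ℕ) (Y : ℕ → Ω → ℕ) (N : ℕ → ℕ → Ω → ℕ) (n : ℕ) (ω : Ω) : ℝ :=
  if IsUnit (Sigmahat K Y N n ω).det then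
    dotProduct (Pvec K Y N n ω) (Matrix.mulVec (Sigmahat K Y N n ω)⁻¹ (Pvec K Y N n ω))
  else 0


/-- Characterization of `sInf` of a set of naturals bounded by `K`. -/
lemma sInf_eq_iff_aux {K : ℕ} {S : Set ℕ} (hb : ∀ k ∈ S, k ≤ K) {m : ℕ} :
    sInf S = m ↔ (m ∈ S ∧ ∀ j < m, j ∉ S) ∨ (m = 0 ∧ ∀ k ≤ K, k ∉ S) := by
  constructor
  · rintro rfl
    rcases S.eq_empty_or_nonempty with rfl | hS
    · exact Or.inr ⟨Nat.sInf_empty, fun k _ h => h⟩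
    · exact Or.inl ⟨Nat.sInf_mem hS, fun j hj => Nat.notMem_of_lt_sInf hj⟩
  · rintro (⟨hm, hmin⟩ | ⟨rfl, hemp⟩)
    · refine le_antisymm (Nat.sInf_le hm) ?_
      by_contra h
      push_neg at h
      exact hmin _ h (Nat.sInf_mem ⟨m, hm⟩)
    · have : S = ∅ := by
        ext k; simp only [Set.mem_empty_iff_false, iff_false]
        intro hk; exact hemp k (hb k hk) hk
      simp [this]

lemma measurable_sInf_pred {α : Type*} [MeasurableSpace α] (K : ℕ) (p : ℕ → α → Prop)
    (hb : ∀ a k, p k a → k ≤ K) (hm : ∀ k, MeasurableSet {a | p k a}) :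
    Measurable fun a => sInf {k | p k a} := by
  refine measurable_to_countable' fun m => ?_
  have heq : (fun a => sInf {k | p k a}) ⁻¹' {m} =
      (({a | p m a} ∩ ⋂ j ∈ Set.Iio m, {a | p j a}ᶜ) ∪
        ({a : α | m = 0} ∩ ⋂ k ∈ Set.Iic K, {a | p k a}ᶜ)) := by
    ext a
    rw [Set.mem_preimage, Set.mem_singleton_iff,
      sInf_eq_iff_aux (S := {k | p k a}) (fun k hk => hb a k hk)]
    simp only [Set.mem_union, Set.mem_inter_iff, Set.mem_iInter, Set.mem_compl_iff,
      Set.mem_setOf_eq, Set.mem_Iio, Set.mem_Iic]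
  rw [heq]
  refine MeasurableSet.union ((hm m).inter ?_) (MeasurableSet.inter ?_ ?_)
  · exact MeasurableSet.biInter (Set.to_countable _) fun j _ => (hm j).compl
  · by_cases h : m = 0 <;> simp [h]
  · exact MeasurableSet.biInter (Set.to_countable _) fun k _ => (hm k).compl

lemma measurable_select {Ω H : Type*} [MeasurableSpace Ω] [MeasurableSpace H]
    {X : ℕ → Ω → H} (hX : ∀ i, Measurable (X i)) {M : Ω → ℕ} (hM : Measurable M) :
    Measurable fun ω => X (M ω) ω := by
  intro B hB
  have : (fun ω => X (M ω) ω) ⁻¹' B = ⋃ j, (M ⁻¹' {j} ∩ X j ⁻¹' B) := by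
    ext ω
    simp only [Set.mem_preimage, Set.mem_iUnion, Set.mem_inter_iff, Set.mem_singleton_iff]
    exact ⟨fun h => ⟨M ω, rfl, h⟩, by rintro ⟨j, rfl, h⟩; exact h⟩
  rw [this]
  exact MeasurableSet.iUnion fun j => (hM (measurableSet_singleton j)).inter (hX j hB)

/-- `f(x,u) = min{k ∈ {1,…,K} : Σ_{j=1}^k g_j(x) > u}`. -/
def catf (K : ℕ) {H : Type*} (g : ℕ → H → ℝ) (x : H) (u : ℝ) : ℕ :=
  sInf {k | k ∈ Finset.Icc 1 K ∧ u < ∑ j ∈ Finset.Icc 1 k, g j x}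

lemma measurable_catf {H : Type*} [MeasurableSpace H] (K : ℕ) (g : ℕ → H → ℝ)
    (hgm : ∀ k, Measurable (g k)) (u : ℝ) : Measurable fun x => catf K g x u := by
  refine measurable_sInf_pred K _ (fun x k hk => (Finset.mem_Icc.mp hk.1).2) fun k => ?_
  have : {x : H | k ∈ Finset.Icc 1 K ∧ u < ∑ j ∈ Finset.Icc 1 k, g j x} =
      {x : H | k ∈ Finset.Icc 1 K} ∩ {x | u < ∑ j ∈ Finset.Icc 1 k, g j x} := rfl
  rw [this]
  refine MeasurableSet.inter ?_ ?_
  · by_cases h : k ∈ Finset.Icc 1 K <;> simp [h]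
  · exact measurableSet_lt measurable_const (Finset.measurable_sum _ fun j _ => hgm j)

/-- Almost surely, the first sample point is approximated arbitrarily well by later points. -/
lemma approx_ae {Ω H : Type*} [MeasurableSpace Ω] [MetricSpace H] [MeasurableSpace H]
    [BorelSpace H] [TopologicalSpace.SeparableSpace H]
    (P : Measure Ω) [IsProbabilityMeasure P] (X : ℕ → Ω → H)
    (hXm : ∀ i, Measurable (X i))
    (hiid : iIndepFun X P)
    (hident : ∀ i, IdentDistrib (X i) (X 0) P P) :
    ∀ᵐ ω ∂P, ∀ δ > (0:ℝ), ∃ j, 1 ≤ j ∧ dist (X 0 ω) (X j ω) < δ := by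
  obtain ⟨D, hDc, hDd⟩ := TopologicalSpace.exists_countable_dense H
  have hball : ∀ (c : H) (r : ℝ), P (X 0 ⁻¹' Metric.ball c r) ≠ 0 →
      ∀ᵐ ω ∂P, ∃ j, 1 ≤ j ∧ X j ω ∈ Metric.ball c r := by
    intro c r h0
    set B := Metric.ball c r with hB
    have hBm : MeasurableSet B := Metric.isOpen_ball.measurableSet
    have hsets : ∀ j : ℕ, MeasurableSet (X (j + 1) ⁻¹' B) := fun j => (hXm _) hBm
    have hind : iIndepSet (fun j => X (j + 1) ⁻¹' B) P := by
      rw [iIndepSet_iff_meas_biInter hsets]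
      intro t
      have hmul := hiid.measure_inter_preimage_eq_mul (t.image (· + 1))
        (sets := fun _ => B) (fun i _ => hBm)
      have h1 : (⋂ i ∈ t.image (· + 1), X i ⁻¹' B) = ⋂ j ∈ t, X (j + 1) ⁻¹' B := by
        ext ω
        simp only [Set.mem_iInter, Finset.mem_image]
        constructor
        · intro h j hj; exact h _ ⟨j, hj, rfl⟩
        · rintro h i ⟨j, hj, rfl⟩; exact h j hj
      have h2 : (∏ i ∈ t.image (· + 1), P (X i ⁻¹' B)) = ∏ j ∈ t, P (X (j + 1) ⁻¹' B) :=
        Finset.prod_image (fun a _ b _ h => by omega)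
      rw [h1, h2] at hmul
      exact hmul
    have hsum : (∑' j : ℕ, P (X (j + 1) ⁻¹' B)) = ⊤ := by
      have hc : ∀ j : ℕ, P (X (j + 1) ⁻¹' B) = P (X 0 ⁻¹' B) := fun j =>
        (hident (j + 1)).measure_mem_eq hBm
      simp only [hc]
      exact ENNReal.tsum_const_eq_top_of_ne_zero h0
    have hlim := measure_limsup_eq_one hsets hind hsum
    have hml : MeasurableSet (limsup (fun j => X (j + 1) ⁻¹' B) atTop) :=
      MeasurableSet.measurableSet_limsup hsets
    have hae : ∀ᵐ ω ∂P, ω ∈ limsup (fun j => X (j + 1) ⁻¹' B) atTop := by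
      rw [ae_iff]
      have : {ω | ¬ ω ∈ limsup (fun j => X (j + 1) ⁻¹' B) atTop} =
          (limsup (fun j => X (j + 1) ⁻¹' B) atTop)ᶜ := rfl
      rw [this, measure_compl hml (measure_ne_top _ _), hlim, measure_univ]
      simp
    filter_upwards [hae] with ω hω
    obtain ⟨j, -, hj⟩ := ((Filter.frequently_atTop).mp
      ((mem_limsup_iff_frequently_mem).mp hω)) 0
    exact ⟨j + 1, by omega, hj⟩
  have hnull : ∀ (c : H) (r : ℝ), P (X 0 ⁻¹' Metric.ball c r) = 0 →
      ∀ᵐ ω ∂P, X 0 ω ∉ Metric.ball c r := by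
    intro c r h0
    rw [ae_iff]
    refine le_antisymm (le_trans (measure_mono ?_) h0.le) zero_le
    intro a ha; simpa using ha
  have key : ∀ᵐ ω ∂P, ∀ c ∈ D, ∀ q : ℚ,
      (P (X 0 ⁻¹' Metric.ball c (q : ℝ)) = 0 → X 0 ω ∉ Metric.ball c (q : ℝ)) ∧
      (P (X 0 ⁻¹' Metric.ball c (q : ℝ)) ≠ 0 →
        ∃ j, 1 ≤ j ∧ X j ω ∈ Metric.ball c (q : ℝ)) := by
    rw [ae_ball_iff hDc]
    intro c _
    rw [ae_all_iff]
    intro q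
    by_cases h0 : P (X 0 ⁻¹' Metric.ball c (q : ℝ)) = 0
    · filter_upwards [hnull c q h0] with ω hω
      exact ⟨fun _ => hω, fun h => absurd h0 h⟩
    · filter_upwards [hball c q h0] with ω hω
      exact ⟨fun h => absurd h h0, fun _ => hω⟩
  filter_upwards [key] with ω hω δ hδ
  obtain ⟨q, hq0, hq⟩ := exists_rat_btwn (half_pos hδ)
  have hq0' : (0 : ℝ) < q := hq0
  obtain ⟨c, hc, hdc⟩ := hDd.exists_dist_lt (X 0 ω) hq0'
  have hX0 : X 0 ω ∈ Metric.ball c (q : ℝ) := by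
    exact Metric.mem_ball.mpr hdc
  have hne : P (X 0 ⁻¹' Metric.ball c (q : ℝ)) ≠ 0 := by
    intro h0
    exact (hω c hc q).1 h0 hX0
  obtain ⟨j, hj1, hjB⟩ := (hω c hc q).2 hne
  refine ⟨j, hj1, ?_⟩
  calc dist (X 0 ω) (X j ω) ≤ dist (X 0 ω) c + dist c (X j ω) := dist_triangle _ _ _
    _ < q + q := by
        refine add_lt_add hdc ?_
        rw [dist_comm]; exact Metric.mem_ball.mp hjB
    _ < δ := by linarith

/-- Lemma 4: if the pair `(X,U)` avoids the boundaries of the decision regions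
`V_k = {(x,u) : f(x,u) = k}` almost surely, then for Lebesgue-almost every `u ∈ (0,1)`
we have `f(X_{N(1)}, u) → f(X_1, u)` in probability. -/
theorem catf_nn_tendsto_in_probability {Ω H : Type*} [MeasurableSpace Ω] [MetricSpace H]
    [MeasurableSpace H] [BorelSpace H] [TopologicalSpace.SeparableSpace H]
    (P : Measure Ω) [IsProbabilityMeasure P] (K : ℕ) (hK : 2 ≤ K)
    (X : ℕ → Ω → H) (Y : Ω → ℕ)
    (hXm : ∀ i, Measurable (X i)) (hY : Measurable Y)
    (hYr : ∀ ω, Y ω ∈ Finset.Icc 1 K)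
    (hp : ∀ k ∈ Finset.Icc 1 K, 0 < P {ω | Y ω = k})
    (hiid : iIndepFun X P)
    (hident : ∀ i, IdentDistrib (X i) (X 0) P P)
    (N : ℕ → ℕ → Ω → ℕ) (hN : ∀ᵐ ω ∂P, IsNNFun X N ω)
    (g : ℕ → H → ℝ) (hgm : ∀ k, Measurable (g k))
    (hgr : ∀ k x, g k x ∈ Set.Icc (0 : ℝ) 1)
    (hg : ∀ k ∈ Finset.Icc 1 K, (fun ω => g k (X 0 ω)) =ᵐ[P] condProb P (X 0) Y k)
    (U : Ω → ℝ) (hU : Measurable U)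
    (hUdist : Measure.map U P = volume.restrict (Set.Ioo (0 : ℝ) 1))
    (hUX : IndepFun U (X 0) P)
    (hboundary : Measure.map (fun ω => (X 0 ω, U ω)) P
      (⋃ k ∈ Finset.Icc 1 K,
        frontier {q : H × ℝ | q.2 ∈ Set.Ioo (0 : ℝ) 1 ∧ catf K g q.1 q.2 = k}) = 0) :
    ∀ᵐ u ∂(volume.restrict (Set.Ioo (0 : ℝ) 1)),
      ∀ ε > (0 : ℝ),
        Filter.Tendsto
          (fun n => P {ω | ε ≤ |((catf K g (X (N n 0 ω) ω) u : ℝ)) -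
            ((catf K g (X 0 ω) u : ℝ))|})
          Filter.atTop (nhds 0) := by
  classical
  haveI : SecondCountableTopology H :=
    UniformSpace.secondCountable_of_separable H
  set μ : Measure H := P.map (X 0) with hμdef
  haveI hμP : IsProbabilityMeasure μ := Measure.isProbabilityMeasure_map (hXm 0).aemeasurable
  set ν : Measure ℝ := volume.restrict (Set.Ioo (0:ℝ) 1) with hνdef
  haveI hνP : IsProbabilityMeasure ν := ⟨by simp [hνdef, Real.volume_Ioo]⟩
  set F : Set (H × ℝ) := ⋃ k ∈ Finset.Icc 1 K,
      frontier {q : H × ℝ | q.2 ∈ Set.Ioo (0:ℝ) 1 ∧ catf K g q.1 q.2 = k} with hFdef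
  have hFm : MeasurableSet F := by
    refine MeasurableSet.biUnion (Finset.Icc 1 K).countable_toSet fun k _ => ?_
    show MeasurableSet (closure _ \ interior _)
    exact isClosed_closure.measurableSet.diff isOpen_interior.measurableSet
  have hmap : P.map (fun ω => (X 0 ω, U ω)) = μ.prod ν := by
    rw [(indepFun_iff_map_prod_eq_prod_map_map (hXm 0).aemeasurable
      hU.aemeasurable).mp hUX.symm, hUdist]
  have hslice : ∀ᵐ u ∂ν, μ ((fun x => (x, u)) ⁻¹' F) = 0 := by
    have h0 : ∫⁻ u, μ ((fun x => (x, u)) ⁻¹' F) ∂ν = 0 := by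
      rw [← Measure.prod_apply_symm hFm, ← hmap, hboundary]
    have := (lintegral_eq_zero_iff (measurable_measure_prodMk_right hFm)).mp h0
    filter_upwards [this] with u hu
    simpa using hu
  -- the conditional probabilities sum to one along `X 0`
  have hm_le : MeasurableSpace.comap (X 0) inferInstance ≤ _ := (hXm 0).comap_le
  have hint : ∀ k ∈ Finset.Icc 1 K, Integrable (ind Y k) P := by
    intro k _
    have : ind Y k = Set.indicator {ω | Y ω = k} (fun _ => (1:ℝ)) := by
      funext ω; simp [ind, Set.indicator_apply]
    rw [this]
    exact (integrable_const 1).indicator (hY (measurableSet_singleton k))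
  have hsum1 : ∀ᵐ ω ∂P, ∑ k ∈ Finset.Icc 1 K, g k (X 0 ω) = 1 := by
    have hce := condExp_finset_sum (m := MeasurableSpace.comap (X 0) inferInstance)
      (μ := P) hint
    have hone : (∑ k ∈ Finset.Icc 1 K, ind Y k) = fun _ => (1:ℝ) := by
      funext ω
      have hmem := hYr ω
      simp only [Finset.sum_apply, ind]
      rw [Finset.sum_ite_eq (Finset.Icc 1 K) (Y ω) (fun _ => (1:ℝ))]
      simp [hmem]
    rw [hone, condExp_const hm_le (1:ℝ)] at hce
    have hgs : ∀ᵐ ω ∂P, ∀ k, k ∈ Finset.Icc 1 K →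
        g k (X 0 ω) = condProb P (X 0) Y k ω := by
      rw [ae_all_iff]
      intro k
      by_cases hk : k ∈ Finset.Icc 1 K
      · filter_upwards [hg k hk] with ω h _
        exact h
      · exact Filter.Eventually.of_forall fun ω h => absurd h hk
    filter_upwards [hce, hgs] with ω h1 h2
    calc ∑ k ∈ Finset.Icc 1 K, g k (X 0 ω)
        = ∑ k ∈ Finset.Icc 1 K, condProb P (X 0) Y k ω := Finset.sum_congr rfl h2
      _ = 1 := by simpa [condProb, Finset.sum_apply] using h1.symm
  have happrox := approx_ae P X hXm hiid hident
  -- measurable version of the nearest-neighbour index of the first point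
  set Nm : ℕ → Ω → ℕ := fun n ω => sInf {j | j < n ∧ j ≠ 0 ∧
      ∀ j' < n, j' ≠ 0 → dist (X 0 ω) (X j ω) ≤ dist (X 0 ω) (X j' ω)} with hNmdef
  have hNm_meas : ∀ n, Measurable (Nm n) := by
    intro n
    refine measurable_sInf_pred n _ (fun ω j hj => le_of_lt hj.1) fun j => ?_
    have hset : {ω : Ω | j < n ∧ j ≠ 0 ∧ ∀ j' < n, j' ≠ 0 →
        dist (X 0 ω) (X j ω) ≤ dist (X 0 ω) (X j' ω)} =
        {ω : Ω | j < n ∧ j ≠ 0} ∩ ⋂ j' ∈ Set.Iio n, {ω | j' ≠ 0 →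
          dist (X 0 ω) (X j ω) ≤ dist (X 0 ω) (X j' ω)} := by
      ext ω
      simp only [Set.mem_inter_iff, Set.mem_setOf_eq, Set.mem_iInter, Set.mem_Iio]
      tauto
    rw [hset]
    refine MeasurableSet.inter ?_
      (MeasurableSet.biInter (Set.to_countable _) fun j' _ => ?_)
    · by_cases h : j < n ∧ j ≠ 0 <;> simp [h]
    · by_cases h : j' = 0
      · simp [h]
      · simp only [h, ne_eq, not_false_iff, true_implies]
        exact measurableSet_le ((hXm 0).dist (hXm j)) ((hXm 0).dist (hXm j'))
  have hNmN : ∀ᵐ ω ∂P, ∀ n, 2 ≤ n → Nm n ω = N n 0 ω := by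
    filter_upwards [hN] with ω hω n hn
    obtain ⟨hlt, hne0, hmin⟩ := hω n hn 0 (by omega)
    have hset : {j | j < n ∧ j ≠ 0 ∧ ∀ j' < n, j' ≠ 0 →
        dist (X 0 ω) (X j ω) ≤ dist (X 0 ω) (X j' ω)} = {N n 0 ω} := by
      ext j
      simp only [Set.mem_setOf_eq, Set.mem_singleton_iff]
      constructor
      · rintro ⟨hjn, hj0, hjm⟩
        by_contra hne
        exact absurd (hjm (N n 0 ω) hlt hne0) (not_le.mpr (hmin j hjn hj0 hne))
      · rintro rfl
        refine ⟨hlt, hne0, fun j' hj' hj'0 => ?_⟩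
        rcases eq_or_ne j' (N n 0 ω) with rfl | hne
        · exact le_rfl
        · exact le_of_lt (hmin j' hj' hj'0 hne)
    simp only [hNmdef]
    rw [hset]
    exact csInf_singleton _
  have hgood : ∀ᵐ u ∂ν, u ∈ Set.Ioo (0:ℝ) 1 ∧ μ ((fun x => (x, u)) ⁻¹' F) = 0 := by
    have h1 : ∀ᵐ u ∂ν, u ∈ Set.Ioo (0:ℝ) 1 := by
      rw [hνdef]; exact ae_restrict_mem measurableSet_Ioo
    exact h1.and hslice
  filter_upwards [hgood] with u hu
  obtain ⟨huIoo, hsl⟩ := hu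
  intro ε hε
  have hφm : Measurable fun x => catf K g x u := measurable_catf K g hgm u
  have hXF : ∀ᵐ ω ∂P, (X 0 ω, u) ∉ F := by
    have hz : P (X 0 ⁻¹' ((fun x => (x, u)) ⁻¹' F)) = 0 := by
      rw [← Measure.map_apply (hXm 0) (measurable_prodMk_right hFm)]
      exact hsl
    rw [ae_iff]
    refine le_antisymm (le_trans (measure_mono ?_) hz.le) zero_le
    intro a ha; simpa using ha
  have hTae : ∀ᵐ ω ∂P, Filter.Tendsto (fun n => ((catf K g (X (Nm n ω) ω) u : ℝ)))
      atTop (nhds ((catf K g (X 0 ω) u : ℝ))) := by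
    filter_upwards [hN, happrox, hsum1, hXF] with ω hNN happ hs hF2
    have humem : u < ∑ j ∈ Finset.Icc 1 K, g j (X 0 ω) := by rw [hs]; exact huIoo.2
    have hKmem : K ∈ {k | k ∈ Finset.Icc 1 K ∧ u < ∑ j ∈ Finset.Icc 1 k, g j (X 0 ω)} :=
      ⟨Finset.mem_Icc.mpr ⟨by omega, le_rfl⟩, humem⟩
    have hkmem : catf K g (X 0 ω) u ∈
        {k | k ∈ Finset.Icc 1 K ∧ u < ∑ j ∈ Finset.Icc 1 k, g j (X 0 ω)} :=
      Nat.sInf_mem ⟨K, hKmem⟩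
    set k := catf K g (X 0 ω) u with hk
    have hV : (X 0 ω, u) ∈
        {q : H × ℝ | q.2 ∈ Set.Ioo (0:ℝ) 1 ∧ catf K g q.1 q.2 = k} := ⟨huIoo, rfl⟩
    have hfr : (X 0 ω, u) ∉
        frontier {q : H × ℝ | q.2 ∈ Set.Ioo (0:ℝ) 1 ∧ catf K g q.1 q.2 = k} := by
      intro h
      exact hF2 (Set.mem_iUnion₂.mpr ⟨k, hkmem.1, h⟩)
    have hintm : (X 0 ω, u) ∈
        interior {q : H × ℝ | q.2 ∈ Set.Ioo (0:ℝ) 1 ∧ catf K g q.1 q.2 = k} := by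
      by_contra hnot
      exact hfr ⟨subset_closure hV, hnot⟩
    obtain ⟨δ, hδ0, hδ⟩ := Metric.isOpen_iff.mp isOpen_interior _ hintm
    obtain ⟨j₀, hj₀, hdj₀⟩ := happ δ hδ0
    have hev : ∀ᶠ n in atTop, ((catf K g (X (Nm n ω) ω) u : ℝ)) = ((k : ℕ) : ℝ) := by
      filter_upwards [eventually_ge_atTop (max 2 (j₀ + 1))] with n hn
      have hn2 : 2 ≤ n := le_trans (le_max_left _ _) hn
      have hj₀n : j₀ < n := lt_of_lt_of_le (lt_of_lt_of_le (Nat.lt_succ_self _)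
        (le_max_right 2 (j₀ + 1))) hn
      obtain ⟨hlt, hne0, hmin⟩ := hNN n hn2 0 (by omega)
      have hNmeq : Nm n ω = N n 0 ω := by
        have hset : {j | j < n ∧ j ≠ 0 ∧ ∀ j' < n, j' ≠ 0 →
            dist (X 0 ω) (X j ω) ≤ dist (X 0 ω) (X j' ω)} = {N n 0 ω} := by
          ext j
          simp only [Set.mem_setOf_eq, Set.mem_singleton_iff]
          constructor
          · rintro ⟨hjn, hj0, hjm⟩
            by_contra hne
            exact absurd (hjm (N n 0 ω) hlt hne0) (not_le.mpr (hmin j hjn hj0 hne))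
          · rintro rfl
            refine ⟨hlt, hne0, fun j' hj' hj'0 => ?_⟩
            rcases eq_or_ne j' (N n 0 ω) with rfl | hne
            · exact le_rfl
            · exact le_of_lt (hmin j' hj' hj'0 hne)
        simp only [hNmdef]
        rw [hset]
        exact csInf_singleton _
      have hdist : dist (X 0 ω) (X (N n 0 ω) ω) < δ := by
        rcases eq_or_ne j₀ (N n 0 ω) with heq | hne
        · rw [← heq]; exact hdj₀
        · exact lt_trans (hmin j₀ hj₀n (by omega) hne) hdj₀
      have hmem : ((X (N n 0 ω) ω, u) : H × ℝ) ∈ Metric.ball ((X 0 ω, u) : H × ℝ) δ := by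
        rw [Metric.mem_ball]
        have hde : dist ((X (N n 0 ω) ω, u) : H × ℝ) (X 0 ω, u) =
            dist (X (N n 0 ω) ω) (X 0 ω) := by
          rw [Prod.dist_eq]; simp [dist_nonneg]
        rw [hde, dist_comm]
        exact hdist
      have hVk := interior_subset (hδ hmem)
      rw [hNmeq]
      exact_mod_cast congrArg (fun m : ℕ => (m : ℝ)) hVk.2
    exact Filter.Tendsto.congr' (hev.mono fun n h => h.symm) tendsto_const_nhds
  have hmeasn : ∀ n, AEStronglyMeasurable
      (fun ω => ((catf K g (X (Nm n ω) ω) u : ℝ))) P := fun n =>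
    (measurable_from_top.comp (hφm.comp
      (measurable_select hXm (hNm_meas n)))).aestronglyMeasurable
  have hT := (tendstoInMeasure_of_tendsto_ae hmeasn hTae) (ENNReal.ofReal ε) (ENNReal.ofReal_pos.mpr hε)
  refine Filter.Tendsto.congr' ?_ hT
  filter_upwards [eventually_ge_atTop 2] with n hn2
  refine measure_congr (Filter.eventuallyEq_set.mpr ?_)
  filter_upwards [hNmN] with ω hNm'
  simp only [Set.mem_setOf_eq, edist_dist, Real.dist_eq, hNm' n hn2]
  rw [ENNReal.ofReal_le_ofReal_iff (abs_nonneg _)]
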